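/- Let f be a piecewise linear function on closed convex Γ with components g_1,…,g_n, let P be a region of the associated arrangement with f = g_{n(P)} on P, and define S_P = {i : g_i(x) ≥ g_{n(P)}(x) for all x ∈ P} and F_P(x) = min_{i∈S_P} g_i(x). Then F_P(x) = f(x) for all x ∈ P, and F_Q(x) ≤ f(x) for all x ∈ P and every region Q. -/

import Mathlib

open Finset
open scoped Classical
open scoped Topology Filter

noncomputable section

/-- Dot product on `Fin d → ℝ`. -/
def dotp {d : ℕ} (a x : Fin d → ℝ) : ℝ := ∑ i, a i * x i

/-- An (affine) linear function `x ↦ a ⬝ x + b`. -/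
def IsAffineFn {d : ℕ} (g : (Fin d → ℝ) → ℝ) : Prop :=
  ∃ (a : Fin d → ℝ) (b : ℝ), ∀ x, g x = dotp a x + b

/-- A closed domain: the closure of a nonempty open set. -/
def IsClosedDomain {d : ℕ} (q : Set (Fin d → ℝ)) : Prop :=
  ∃ U : Set (Fin d → ℝ), IsOpen U ∧ U.Nonempty ∧ q = closure U

/-- `f` is piecewise linear on `Γ`: a finite family of closed domains covers `Γ`
and `f` agrees with an affine function on each of them. -/
def IsPWLOn {d : ℕ} (Γ : Set (Fin d → ℝ)) (f : (Fin d → ℝ) → ℝ) : Prop :=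
  ∃ 𝒬 : Finset (Set (Fin d → ℝ)),
    (∀ q ∈ 𝒬, IsClosedDomain q) ∧ (Γ = ⋃ q ∈ 𝒬, (q : Set (Fin d → ℝ))) ∧
    ∀ q ∈ 𝒬, ∃ g, IsAffineFn g ∧ ∀ x ∈ q, f x = g x

/-- `f` is piecewise linear on `Γ` with all pieces taken from the family `g`. -/
def IsPWLWith {d n : ℕ} (Γ : Set (Fin d → ℝ)) (f : (Fin d → ℝ) → ℝ)
    (g : Fin n → (Fin d → ℝ) → ℝ) : Prop :=
  ∃ 𝒬 : Finset (Set (Fin d → ℝ)),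
    (∀ q ∈ 𝒬, IsClosedDomain q) ∧ (Γ = ⋃ q ∈ 𝒬, (q : Set (Fin d → ℝ))) ∧
    ∀ q ∈ 𝒬, ∃ i, ∀ x ∈ q, f x = g i x

/-- The hyperplane `h` (a pair `(a, b)` encoding `{x | a ⬝ x = b}`) separates `P` and `Q`:
they lie in opposite open halfspaces. -/
def SepH {d : ℕ} (h : (Fin d → ℝ) × ℝ) (P Q : Set (Fin d → ℝ)) : Prop :=
  ((∀ x ∈ P, dotp h.1 x < h.2) ∧ (∀ x ∈ Q, h.2 < dotp h.1 x)) ∨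
  ((∀ x ∈ P, h.2 < dotp h.1 x) ∧ (∀ x ∈ Q, dotp h.1 x < h.2))

/-- The separation set `S(P,Q)`: hyperplanes of `H` separating `P` and `Q`. -/
def sepSet {d : ℕ} (H : Finset ((Fin d → ℝ) × ℝ)) (P Q : Set (Fin d → ℝ)) :
    Finset ((Fin d → ℝ) × ℝ) :=
  H.filter (fun h => SepH h P Q)

/-- The hyperplane encoded by the pair `h = (a, b)`. -/
def hypSet {d : ℕ} (h : (Fin d → ℝ) × ℝ) : Set (Fin d → ℝ) := {x | dotp h.1 x = h.2}

/-- The union of the hyperplanes of the arrangement `H`. -/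
def hypUnion {d : ℕ} (H : Finset ((Fin d → ℝ) × ℝ)) : Set (Fin d → ℝ) :=
  ⋃ h ∈ H, hypSet h

/-- The regions determined by a set `C`: the connected components of `C`. -/
def regionsOf {d : ℕ} (C : Set (Fin d → ℝ)) : Set (Set (Fin d → ℝ)) :=
  {P | ∃ x ∈ C, P = connectedComponentIn C x}

/-- The complement (inside `interior Γ`) of the arrangement associated with the
family of components `g`: points where all the `g i` take pairwise distinct values. -/
def armCompl {d n : ℕ} (Γ : Set (Fin d → ℝ)) (g : Fin n → (Fin d → ℝ) → ℝ) :
    Set (Fin d → ℝ) :=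
  {x | x ∈ interior Γ ∧ ∀ i j : Fin n, i ≠ j → g i x ≠ g j x}

lemma affine_continuous {d : ℕ} {g : (Fin d → ℝ) → ℝ} (hg : IsAffineFn g) : Continuous g := by
  obtain ⟨a, b, hab⟩ := hg
  have : g = fun x => (∑ i, a i * x i) + b := by funext x; rw [hab]; rfl
  rw [this]
  exact (continuous_finset_sum _ fun i _ =>
    (continuous_const.mul (continuous_apply i))).add continuous_const

lemma affine_segment {d : ℕ} {g : (Fin d → ℝ) → ℝ} (hg : IsAffineFn g) (x y : Fin d → ℝ) (t : ℝ) :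
    g ((1 - t) • x + t • y) = (1 - t) * g x + t * g y := by
  obtain ⟨a, b, hab⟩ := hg
  simp only [hab, dotp]
  have h : ∀ i, a i * ((1 - t) * x i + t * y i) = (1 - t) * (a i * x i) + t * (a i * y i) := by
    intro i; ring
  simp_rw [Pi.add_apply, Pi.smul_apply, smul_eq_mul, h, Finset.sum_add_distrib, ← Finset.mul_sum]
  ring

lemma onedim {n : ℕ} (φ : ℝ → ℝ) (u v : Fin n → ℝ)
    (hφ : ContinuousOn φ (Set.Icc (0:ℝ) 1))
    (hcov : ∀ t ∈ Set.Icc (0:ℝ) 1, ∃ i, φ t = (1 - t) * u i + t * v i) :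
    ∃ i, u i ≤ φ 0 ∧ φ 1 ≤ v i := by
  set ℓ : Fin n → ℝ → ℝ := fun i t => (1 - t) * u i + t * v i with hℓ
  have hℓcont : ∀ i, Continuous (ℓ i) := by
    intro i; simp only [hℓ]; fun_prop
  set S : Set ℝ := {t | t ∈ Set.Icc (0:ℝ) 1 ∧ ∃ i, u i ≤ φ 0 ∧ φ t ≤ ℓ i t} with hS
  have hS0 : (0:ℝ) ∈ S := by
    obtain ⟨i, hi⟩ := hcov 0 (by norm_num)
    norm_num at hi
    refine ⟨by norm_num, i, le_of_eq hi.symm, ?_⟩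
    simp only [hℓ]
    norm_num
    exact le_of_eq hi
  have hSclosed : IsClosed S := by
    have hrw : S = ⋃ i : Fin n, {t | t ∈ Set.Icc (0:ℝ) 1 ∧ u i ≤ φ 0 ∧ φ t ≤ ℓ i t} := by
      ext t
      simp only [hS, Set.mem_setOf_eq, Set.mem_iUnion]
      tauto
    rw [hrw]
    apply isClosed_iUnion_of_finite
    intro i
    by_cases hi : u i ≤ φ 0
    · have : {t | t ∈ Set.Icc (0:ℝ) 1 ∧ u i ≤ φ 0 ∧ φ t ≤ ℓ i t}
          = Set.Icc (0:ℝ) 1 ∩ (fun t => φ t - ℓ i t) ⁻¹' Set.Iic 0 := by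
        ext t
        simp [hi, sub_nonpos]
      rw [this]
      exact (hφ.sub (hℓcont i).continuousOn).preimage_isClosed_of_isClosed isClosed_Icc isClosed_Iic
    · have : {t | t ∈ Set.Icc (0:ℝ) 1 ∧ u i ≤ φ 0 ∧ φ t ≤ ℓ i t} = ∅ := by
        ext t; simp [hi]
      rw [this]; exact isClosed_empty
  have hSbdd : BddAbove S := ⟨1, fun t ht => ht.1.2⟩
  set T := sSup S with hT
  have hTS : T ∈ S := hSclosed.csSup_mem ⟨0, hS0⟩ hSbdd
  obtain ⟨hTIcc, j, hj0, hjT⟩ := hTS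
  by_cases hT1 : T = 1
  · refine ⟨j, hj0, ?_⟩
    rw [hT1] at hjT
    simp only [hℓ] at hjT; linarith
  exfalso
  have hTlt : T < 1 := lt_of_le_of_ne hTIcc.2 hT1
  have hT0le : (0:ℝ) ≤ T := hTIcc.1
  -- the filter of points just to the right of T
  have hevIcc : ∀ᶠ t in 𝓝[>] T, t ∈ Set.Icc (0:ℝ) 1 ∧ T < t := by
    have h1 : ∀ᶠ t in 𝓝[>] T, t < 1 := by
      apply eventually_nhdsWithin_of_eventually_nhds
      exact Filter.Tendsto.eventually_lt_const hTlt Filter.tendsto_id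
    filter_upwards [h1, self_mem_nhdsWithin] with t ht1 ht2
    exact ⟨⟨le_of_lt (lt_of_le_of_lt hT0le ht2), le_of_lt ht1⟩, ht2⟩
  have hle : 𝓝[>] T ≤ 𝓝[Set.Icc (0:ℝ) 1] T := by
    rw [nhdsWithin, nhdsWithin]
    refine le_inf inf_le_left (Filter.le_principal_iff.mpr ?_)
    filter_upwards [hevIcc] with t ht using ht.1
  have hφT : Filter.Tendsto φ (𝓝[>] T) (𝓝 (φ T)) := (hφ T hTIcc).mono_left hle
  have hmax : ∀ t ∈ S, t ≤ T := fun t ht => le_csSup hSbdd ht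
  rcases lt_or_eq_of_le hjT with hcase | hcase
  · -- φ T < ℓ j T : remains above φ slightly to the right
    have htd : Filter.Tendsto (fun t => ℓ j t - φ t) (𝓝[>] T) (𝓝 (ℓ j T - φ T)) :=
      ((hℓcont j).continuousAt.continuousWithinAt.tendsto).sub hφT
    have hpos : ∀ᶠ t in 𝓝[>] T, 0 < ℓ j t - φ t :=
      htd.eventually (eventually_gt_nhds (by linarith))
    obtain ⟨t, ht1, ht2⟩ := (hpos.and hevIcc).exists
    exact absurd (hmax t ⟨ht2.1, j, hj0, by linarith⟩) (not_le.mpr ht2.2)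
  · -- φ T = ℓ j T
    -- find i occurring frequently to the right
    have hfreq : ∃ i, ∃ᶠ t in 𝓝[>] T, φ t = ℓ i t := by
      by_contra h
      push_neg at h
      have hall : ∀ᶠ t in 𝓝[>] T, ∀ i, ¬ φ t = ℓ i t :=
        Filter.eventually_all.mpr fun i => h i
      obtain ⟨t, ht1, ht2⟩ := (hall.and hevIcc).exists
      obtain ⟨i, hi⟩ := hcov t ht2.1
      exact ht1 i hi
    obtain ⟨i, hifreq⟩ := hfreq
    have hiT : φ T = ℓ i T :=
      tendsto_nhds_unique_of_frequently_eq hφT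
        (hℓcont i).continuousAt.continuousWithinAt.tendsto hifreq
    by_cases hui : u i ≤ φ 0
    · obtain ⟨t, ht1, ht2⟩ := (hifreq.and_eventually hevIcc).exists
      exact absurd (hmax t ⟨ht2.1, i, hui, le_of_eq ht1⟩) (not_le.mpr ht2.2)
    · push_neg at hui
      have hT0 : 0 < T := by
        rcases lt_or_eq_of_le hT0le with h | h
        · exact h
        · exfalso
          have : φ 0 = ℓ i 0 := by rw [h]; exact hiT
          simp only [hℓ] at this
          norm_num at this
          linarith
      have huj : u j < u i := lt_of_le_of_lt hj0 hui
      have heq : ℓ j T = ℓ i T := by rw [← hcase, hiT]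
      have hcomp : ∀ t, T < t → ℓ i t < ℓ j t := by
        intro t ht
        simp only [hℓ] at heq ⊢
        nlinarith [mul_pos (sub_pos.mpr huj) (sub_pos.mpr ht), mul_pos hT0 (sub_pos.mpr ht)]
      obtain ⟨t, ht1, ht2⟩ := (hifreq.and_eventually hevIcc).exists
      refine absurd (hmax t ⟨ht2.1, j, hj0, ?_⟩) (not_le.mpr ht2.2)
      rw [ht1]
      exact le_of_lt (hcomp t ht2.2)

lemma pwl_coverage {d n : ℕ} {Γ : Set (Fin d → ℝ)} {f : (Fin d → ℝ) → ℝ}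
    {g : Fin n → (Fin d → ℝ) → ℝ} (hf : IsPWLWith Γ f g) :
    ∀ z ∈ Γ, ∃ i, f z = g i z := by
  obtain ⟨𝒬, _, hcov, hagree⟩ := hf
  intro z hz
  rw [hcov] at hz
  simp only [Set.mem_iUnion] at hz
  obtain ⟨q, hq, hzq⟩ := hz
  obtain ⟨i, hi⟩ := hagree q hq
  exact ⟨i, hi z hzq⟩

lemma pwl_continuousOn {d n : ℕ} {Γ : Set (Fin d → ℝ)} {f : (Fin d → ℝ) → ℝ}
    {g : Fin n → (Fin d → ℝ) → ℝ} (hga : ∀ i, IsAffineFn (g i))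
    (hf : IsPWLWith Γ f g) : ContinuousOn f Γ := by
  obtain ⟨𝒬, hQc, hcov, hagree⟩ := hf
  intro z hz
  have hclosed : ∀ q ∈ 𝒬, IsClosed q := by
    intro q hq
    obtain ⟨U, _, _, hU⟩ := hQc q hq
    rw [hU]; exact isClosed_closure
  set V : Set (Fin d → ℝ) := ⋂ q ∈ 𝒬.filter (fun q => z ∉ q), qᶜ with hV
  have hVopen : IsOpen V := by
    apply isOpen_biInter_finset
    intro q hq
    exact (hclosed q (Finset.mem_filter.mp hq).1).isOpen_compl
  have hzV : z ∈ V := by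
    simp only [hV, Set.mem_iInter]
    intro q hq
    exact (Finset.mem_filter.mp hq).2
  have hkey : ∀ w ∈ V, w ∈ Γ → ∃ i, f w = g i w ∧ f z = g i z := by
    intro w hwV hwΓ
    rw [hcov] at hwΓ
    simp only [Set.mem_iUnion] at hwΓ
    obtain ⟨q, hq, hwq⟩ := hwΓ
    have hzq : z ∈ q := by
      by_contra hzq
      have : q ∈ 𝒬.filter (fun q => z ∉ q) := Finset.mem_filter.mpr ⟨hq, hzq⟩
      simp only [hV, Set.mem_iInter] at hwV
      exact hwV q this hwq
    obtain ⟨i, hi⟩ := hagree q hq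
    exact ⟨i, hi w hwq, hi z hzq⟩
  rw [ContinuousWithinAt, Metric.tendsto_nhds]
  intro ε hε
  have hev1 : ∀ᶠ w in 𝓝[Γ] z, w ∈ V :=
    eventually_nhdsWithin_of_eventually_nhds (hVopen.eventually_mem hzV)
  have hev2 : ∀ᶠ w in 𝓝[Γ] z, w ∈ Γ := self_mem_nhdsWithin
  have hev3 : ∀ᶠ w in 𝓝[Γ] z, ∀ i : Fin n, dist (g i w) (g i z) < ε := by
    rw [Filter.eventually_all]
    intro i
    have : Filter.Tendsto (g i) (𝓝[Γ] z) (𝓝 (g i z)) :=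
      (affine_continuous (hga i)).continuousWithinAt.tendsto
    exact Metric.tendsto_nhds.mp this ε hε
  filter_upwards [hev1, hev2, hev3] with w hw1 hw2 hw3
  obtain ⟨i, hfw, hfz⟩ := hkey w hw1 hw2
  rw [hfw, hfz]
  exact hw3 i

lemma pwl_key {d n : ℕ} {Γ : Set (Fin d → ℝ)} (hΓv : Convex ℝ Γ)
    {f : (Fin d → ℝ) → ℝ} {g : Fin n → (Fin d → ℝ) → ℝ}
    (hga : ∀ i, IsAffineFn (g i)) (hf : IsPWLWith Γ f g)
    {x y : Fin d → ℝ} (hx : x ∈ Γ) (hy : y ∈ Γ) :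
    ∃ k, g k x ≤ f x ∧ f y ≤ g k y := by
  set γ : ℝ → (Fin d → ℝ) := fun t => (1 - t) • x + t • y with hγ
  have hseg : ∀ t ∈ Set.Icc (0:ℝ) 1, γ t ∈ Γ := by
    intro t ht
    exact hΓv hx hy (by linarith [ht.2]) ht.1 (by ring)
  have hγcont : Continuous γ := by fun_prop
  set φ : ℝ → ℝ := fun t => f (γ t) with hφ
  have hφcont : ContinuousOn φ (Set.Icc (0:ℝ) 1) :=
    (pwl_continuousOn hga hf).comp hγcont.continuousOn hseg
  have hcov' : ∀ t ∈ Set.Icc (0:ℝ) 1, ∃ i, φ t = (1 - t) * g i x + t * g i y := by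
    intro t ht
    obtain ⟨i, hi⟩ := pwl_coverage ⟨_, by exact (hf.choose_spec)⟩ (γ t) (hseg t ht)
    exact ⟨i, by rw [hφ]; simp only; rw [hi, hγ]; simp only; rw [affine_segment (hga i)]⟩
  obtain ⟨k, h0, h1⟩ := onedim φ (fun i => g i x) (fun i => g i y) hφcont hcov'
  have hγ0 : γ 0 = x := by simp [hγ]
  have hγ1 : γ 1 = y := by simp [hγ]
  refine ⟨k, ?_, ?_⟩
  · have : φ 0 = f x := by rw [hφ]; simp only; rw [hγ0]
    rwa [this] at h0
  · have : φ 1 = f y := by rw [hφ]; simp only; rw [hγ1]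
    rwa [this] at h1

lemma sign_const {d n : ℕ} {Γ : Set (Fin d → ℝ)} {g : Fin n → (Fin d → ℝ) → ℝ}
    (hga : ∀ i, IsAffineFn (g i)) {C : Set (Fin d → ℝ)} (hC : IsPreconnected C)
    (hC' : C ⊆ armCompl Γ g) {k q : Fin n} {y : Fin d → ℝ} (hy : y ∈ C)
    (h : g q y ≤ g k y) : ∀ y' ∈ C, g q y' ≤ g k y' := by
  by_cases hkq : k = q
  · intro y' _; rw [hkq]
  · have hne : g k y ≠ g q y := (hC' hy).2 k q hkq
    have hlt : g q y < g k y := lt_of_le_of_ne h (Ne.symm hne)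
    intro y' hy'
    by_contra hcon
    push_neg at hcon
    have hcont : ContinuousOn (fun z => g k z - g q z) C :=
      ((affine_continuous (hga k)).sub (affine_continuous (hga q))).continuousOn
    have h0 : (0:ℝ) ∈ Set.Icc (g k y' - g q y') (g k y - g q y) :=
      ⟨by linarith, by linarith⟩
    obtain ⟨z, hz, hz0⟩ := hC.intermediate_value hy' hy hcont h0
    exact (hC' hz).2 k q hkq (by linarith [sub_eq_zero.mp hz0])

/-- with `S_P = {i : g i ≥ g_{n(P)} on P}` and `F_P = min_{i ∈ S_P} g i`,
we have `F_P = f` on `P`, and `F_Q ≤ f` on `P` for every region `Q`. -/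
theorem FP_eq_and_FQ_le {d n : ℕ} {Γ : Set (Fin d → ℝ)} (hΓc : IsClosed Γ)
    (hΓv : Convex ℝ Γ) {f : (Fin d → ℝ) → ℝ} {g : Fin n → (Fin d → ℝ) → ℝ}
    (hga : ∀ i, IsAffineFn (g i)) (hgd : Function.Injective g)
    (hf : IsPWLWith Γ f g)
    {P : Set (Fin d → ℝ)} (hP : P ∈ regionsOf (armCompl Γ g))
    {p : Fin n} (hfp : ∀ x ∈ P, f x = g p x) :
    (∀ x ∈ P,
      (Finset.univ.filter (fun i => ∀ y ∈ P, g p y ≤ g i y)).inf'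
        ⟨p, Finset.mem_filter.mpr ⟨Finset.mem_univ _, fun _ _ => le_rfl⟩⟩
        (fun i => g i x) = f x) ∧
    ∀ Q ∈ regionsOf (armCompl Γ g), ∀ q : Fin n, (∀ x ∈ Q, f x = g q x) →
      ∀ x ∈ P,
        (Finset.univ.filter (fun i => ∀ y ∈ Q, g q y ≤ g i y)).inf'
          ⟨q, Finset.mem_filter.mpr ⟨Finset.mem_univ _, fun _ _ => le_rfl⟩⟩
          (fun i => g i x) ≤ f x := by
  constructor
  · intro x hx
    apply le_antisymm
    · calc _ ≤ g p x := Finset.inf'_le (fun i => g i x)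
              (Finset.mem_filter.mpr ⟨Finset.mem_univ _, fun _ _ => le_rfl⟩)
        _ = f x := (hfp x hx).symm
    · rw [hfp x hx]
      apply Finset.le_inf'
      intro i hi
      exact (Finset.mem_filter.mp hi).2 x hx
  · intro Q hQ q hfq x hx
    obtain ⟨y₀, hy₀C, rfl⟩ := hQ
    obtain ⟨x₀, hx₀C, hPeq⟩ := hP
    have hPsub : P ⊆ armCompl Γ g := hPeq ▸ connectedComponentIn_subset _ _
    have hQsub : connectedComponentIn (armCompl Γ g) y₀ ⊆ armCompl Γ g :=
      connectedComponentIn_subset _ _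
    have hy₀ : y₀ ∈ connectedComponentIn (armCompl Γ g) y₀ := mem_connectedComponentIn hy₀C
    have hxΓ : x ∈ Γ := interior_subset (hPsub hx).1
    have hyΓ : y₀ ∈ Γ := interior_subset hy₀C.1
    obtain ⟨k, hkx, hky⟩ := pwl_key hΓv hga hf hxΓ hyΓ
    have hky' : g q y₀ ≤ g k y₀ := by rw [← hfq y₀ hy₀]; exact hky
    have hall : ∀ y' ∈ connectedComponentIn (armCompl Γ g) y₀, g q y' ≤ g k y' :=
      sign_const hga isPreconnected_connectedComponentIn hQsub hy₀ hky'
    calc _ ≤ g k x := Finset.inf'_le (fun i => g i x)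
              (Finset.mem_filter.mpr ⟨Finset.mem_univ _, hall⟩)
      _ ≤ f x := hkx
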